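/- Every involutive anti-isometry ν of the Gaussian lattice L_z is conjugate under Isom(L_z) to exactly one of κ₁ and κ₃; that is, for every involutive anti-isometry ν there exists A ∈ Isom(L_z) with ν = A∘κ₁∘A⁻¹ or ν = A∘κ₃∘A⁻¹, and there is no A ∈ Isom(L_z) with κ₃ = A∘κ₁∘A⁻¹. In particular, L_z admits exactly two Isom(L_z)-conjugacy classes of involutive anti-isometries. -/

import Mathlib

/-- The imaginary unit `i` in the Gaussian integers `ℤ[i]`. -/
def gi : GaussianInt := Zsqrtd.sqrtd

/-- The underlying `ℤ[i]`-module of the Gaussian lattice `L_z`. -/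
abbrev Lz : Type := GaussianInt × GaussianInt

/-- The Hermitian form of `L_z`, given by the matrix `[[-2, 1-i], [1+i, -2]]`;
conjugate-linear in the first argument, linear in the second. -/
def hz (x y : Lz) : GaussianInt :=
  star x.1 * (-2) * y.1 + star x.1 * (1 - gi) * y.2 +
    star x.2 * (1 + gi) * y.1 + star x.2 * (-2) * y.2

/-- An isometry of `L_z`: a `ℤ[i]`-linear bijection preserving the form `hz`. -/
def IsIsomLz (A : Lz → Lz) : Prop :=
  Function.Bijective A ∧ (∀ x y : Lz, A (x + y) = A x + A y) ∧
    (∀ (c : GaussianInt) (x : Lz), A (c • x) = c • A x) ∧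
    ∀ x y : Lz, hz (A x) (A y) = hz x y

/-- An involutive anti-isometry of `L_z`: an additive bijection `ν` with
`ν (c • v) = c̄ • ν v`, `hz (ν x) (ν y) = conj (hz x y)` and `ν ∘ ν = id`. -/
def IsInvAntiIsomLz (ν : Lz → Lz) : Prop :=
  Function.Bijective ν ∧ (∀ x y : Lz, ν (x + y) = ν x + ν y) ∧
    (∀ (c : GaussianInt) (x : Lz), ν (c • x) = star c • ν x) ∧
    (∀ x y : Lz, hz (ν x) (ν y) = star (hz x y)) ∧
    ∀ x : Lz, ν (ν x) = x

/-- The anti-isometry `κ₁ : (x₁, x₂) ↦ (−x̄₂, −x̄₁)` of `L_z`. -/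
def kappa1 (x : Lz) : Lz := (-(star x.2), -(star x.1))

/-- The anti-isometry `κ₃ : (x₁, x₂) ↦ (i·x̄₁, −x̄₂)` of `L_z`. -/
def kappa3 (x : Lz) : Lz := (gi * star x.1, -(star x.2))

/- ### Auxiliary material -/

lemma star_gi : star gi = -gi := by decide

/-- The possible entries of a vector of `hz`-norm `-2`: Gaussian integers of norm `≤ 2`. -/
def entries : List GaussianInt :=
  [⟨-1,-1⟩, ⟨-1,0⟩, ⟨-1,1⟩, ⟨0,-1⟩, ⟨0,0⟩, ⟨0,1⟩, ⟨1,-1⟩, ⟨1,0⟩, ⟨1,1⟩]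

lemma mem_entries (x y : ℤ) (h : x^2 + y^2 ≤ 2) : (⟨x, y⟩ : GaussianInt) ∈ entries := by
  have hx : -1 ≤ x ∧ x ≤ 1 := by constructor <;> nlinarith [sq_nonneg y]
  have hy : -1 ≤ y ∧ y ≤ 1 := by constructor <;> nlinarith [sq_nonneg x]
  obtain ⟨hx1, hx2⟩ := hx; obtain ⟨hy1, hy2⟩ := hy
  interval_cases x <;> interval_cases y <;> decide

lemma entries_bound (v : Lz) (h : hz v v = -2) : v.1 ∈ entries ∧ v.2 ∈ entries := by
  obtain ⟨⟨p1, p2⟩, ⟨q1, q2⟩⟩ := v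
  rw [Zsqrtd.ext_iff] at h
  obtain ⟨h1, _⟩ := h
  simp only [hz, gi] at h1
  simp only [Zsqrtd.re_add, Zsqrtd.re_mul, Zsqrtd.im_mul, Zsqrtd.im_add, Zsqrtd.re_star,
    Zsqrtd.im_star, Zsqrtd.re_sub, Zsqrtd.im_sub, Zsqrtd.re_one, Zsqrtd.im_one,
    Zsqrtd.re_sqrtd, Zsqrtd.im_sqrtd, Zsqrtd.re_neg, Zsqrtd.im_neg,
    show ((2:GaussianInt)).re = 2 from rfl, show ((2:GaussianInt)).im = 0 from rfl] at h1
  have key1 : p1^2 + p2^2 + (p1 - q1 - q2)^2 + (p2 + q1 - q2)^2 = 2 := by linear_combination -h1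
  have key2 : q1^2 + q2^2 + (q1 - p1 + p2)^2 + (q2 - p1 - p2)^2 = 2 := by linear_combination -h1
  constructor <;> apply mem_entries <;>
    nlinarith [sq_nonneg (p1-q1-q2), sq_nonneg (p2+q1-q2), sq_nonneg (q1-p1+p2), sq_nonneg (q2-p1-p2)]

/-- The list of the isometries (with their inverses) used to conjugate each involutive
anti-isometry to `κ₁` or `κ₃`. Entries: `(n1, n2, n3, n4, p1, p2, p3, p4)`, the matrix
of the isometry followed by the matrix of its inverse. -/
def conjList : List (GaussianInt × GaussianInt × GaussianInt × GaussianInt × GaussianInt × GaussianInt × GaussianInt × GaussianInt) := [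
  (⟨(-1), 1⟩, ⟨0, (-1)⟩, ⟨(-1), 0⟩, ⟨0, 0⟩, ⟨0, 0⟩, ⟨(-1), 0⟩, ⟨0, 1⟩, ⟨(-1), (-1)⟩),
  (⟨(-1), (-1)⟩, ⟨1, 0⟩, ⟨0, (-1)⟩, ⟨0, 1⟩, ⟨0, 1⟩, ⟨(-1), 0⟩, ⟨0, 1⟩, ⟨(-1), (-1)⟩),
  (⟨0, (-1)⟩, ⟨0, 1⟩, ⟨0, (-1)⟩, ⟨0, 0⟩, ⟨0, 0⟩, ⟨0, 1⟩, ⟨0, (-1)⟩, ⟨0, 1⟩),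
  (⟨0, (-1)⟩, ⟨0, 1⟩, ⟨0, 0⟩, ⟨(-1), 0⟩, ⟨0, 1⟩, ⟨(-1), 0⟩, ⟨0, 0⟩, ⟨(-1), 0⟩),
  (⟨(-1), (-1)⟩, ⟨1, 0⟩, ⟨0, (-1)⟩, ⟨0, 0⟩, ⟨0, 0⟩, ⟨0, 1⟩, ⟨1, 0⟩, ⟨(-1), 1⟩),
  (⟨(-1), 0⟩, ⟨0, 0⟩, ⟨0, (-1)⟩, ⟨0, 1⟩, ⟨(-1), 0⟩, ⟨0, 0⟩, ⟨(-1), 0⟩, ⟨0, (-1)⟩),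
  (⟨(-1), 1⟩, ⟨0, (-1)⟩, ⟨(-1), 0⟩, ⟨1, 0⟩, ⟨(-1), 0⟩, ⟨0, (-1)⟩, ⟨(-1), 0⟩, ⟨1, (-1)⟩),
  (⟨(-1), 0⟩, ⟨0, (-1)⟩, ⟨(-1), 0⟩, ⟨1, (-1)⟩, ⟨(-1), 1⟩, ⟨0, (-1)⟩, ⟨(-1), 0⟩, ⟨1, 0⟩),
  (⟨(-1), 0⟩, ⟨0, 0⟩, ⟨(-1), (-1)⟩, ⟨1, 0⟩, ⟨(-1), 0⟩, ⟨0, 0⟩, ⟨(-1), (-1)⟩, ⟨1, 0⟩),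
  (⟨(-1), 1⟩, ⟨0, (-1)⟩, ⟨(-1), 0⟩, ⟨0, (-1)⟩, ⟨0, (-1)⟩, ⟨0, 1⟩, ⟨1, 0⟩, ⟨(-1), 1⟩),
  (⟨(-1), 0⟩, ⟨0, (-1)⟩, ⟨(-1), (-1)⟩, ⟨1, 0⟩, ⟨0, 1⟩, ⟨(-1), 0⟩, ⟨(-1), 1⟩, ⟨0, (-1)⟩),
  (⟨0, (-1)⟩, ⟨0, 0⟩, ⟨0, 0⟩, ⟨0, (-1)⟩, ⟨0, 1⟩, ⟨0, 0⟩, ⟨0, 0⟩, ⟨0, 1⟩),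
  (⟨0, (-1)⟩, ⟨0, 0⟩, ⟨0, (-1)⟩, ⟨1, 0⟩, ⟨0, 1⟩, ⟨0, 0⟩, ⟨(-1), 0⟩, ⟨1, 0⟩),
  (⟨(-1), 0⟩, ⟨1, (-1)⟩, ⟨0, (-1)⟩, ⟨1, 0⟩, ⟨0, (-1)⟩, ⟨1, 1⟩, ⟨1, 0⟩, ⟨0, 1⟩),
  (⟨(-1), 0⟩, ⟨0, 0⟩, ⟨0, 0⟩, ⟨(-1), 0⟩, ⟨(-1), 0⟩, ⟨0, 0⟩, ⟨0, 0⟩, ⟨(-1), 0⟩),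
  (⟨(-1), 1⟩, ⟨0, (-1)⟩, ⟨(-1), 0⟩, ⟨1, (-1)⟩, ⟨(-1), (-1)⟩, ⟨1, 0⟩, ⟨0, (-1)⟩, ⟨1, 1⟩),
  (⟨(-1), (-1)⟩, ⟨1, 0⟩, ⟨0, (-1)⟩, ⟨1, 1⟩, ⟨(-1), 1⟩, ⟨0, (-1)⟩, ⟨(-1), 0⟩, ⟨1, (-1)⟩),
  (⟨(-1), 0⟩, ⟨1, (-1)⟩, ⟨(-1), (-1)⟩, ⟨1, 0⟩, ⟨1, 0⟩, ⟨(-1), 1⟩, ⟨1, 1⟩, ⟨(-1), 0⟩),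
  (⟨(-1), 0⟩, ⟨0, 0⟩, ⟨(-1), 0⟩, ⟨0, (-1)⟩, ⟨(-1), 0⟩, ⟨0, 0⟩, ⟨0, (-1)⟩, ⟨0, 1⟩),
  (⟨0, (-1)⟩, ⟨1, 0⟩, ⟨0, (-1)⟩, ⟨1, 1⟩, ⟨1, 1⟩, ⟨(-1), 0⟩, ⟨0, 1⟩, ⟨0, (-1)⟩),
  (⟨0, (-1)⟩, ⟨1, 0⟩, ⟨0, 0⟩, ⟨1, 0⟩, ⟨0, 1⟩, ⟨0, (-1)⟩, ⟨0, 0⟩, ⟨1, 0⟩),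
  (⟨(-1), 0⟩, ⟨0, (-1)⟩, ⟨0, 0⟩, ⟨0, (-1)⟩, ⟨(-1), 0⟩, ⟨1, 0⟩, ⟨0, 0⟩, ⟨0, 1⟩),
  (⟨(-1), (-1)⟩, ⟨1, 0⟩, ⟨0, (-1)⟩, ⟨1, 0⟩, ⟨(-1), 0⟩, ⟨1, 0⟩, ⟨0, (-1)⟩, ⟨1, 1⟩),
  (⟨(-1), 0⟩, ⟨1, (-1)⟩, ⟨0, 0⟩, ⟨1, 0⟩, ⟨(-1), 0⟩, ⟨1, (-1)⟩, ⟨0, 0⟩, ⟨1, 0⟩),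
  (⟨(-1), 0⟩, ⟨0, (-1)⟩, ⟨0, (-1)⟩, ⟨0, 0⟩, ⟨0, 0⟩, ⟨0, 1⟩, ⟨0, 1⟩, ⟨(-1), 0⟩),
  (⟨(-1), 0⟩, ⟨1, (-1)⟩, ⟨(-1), 0⟩, ⟨1, 0⟩, ⟨0, 1⟩, ⟨(-1), (-1)⟩, ⟨0, 1⟩, ⟨0, (-1)⟩),
  (⟨(-1), 0⟩, ⟨1, 0⟩, ⟨(-1), (-1)⟩, ⟨1, 0⟩, ⟨0, (-1)⟩, ⟨0, 1⟩, ⟨1, (-1)⟩, ⟨0, 1⟩),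
  (⟨(-1), 0⟩, ⟨1, 0⟩, ⟨(-1), 0⟩, ⟨0, 0⟩, ⟨0, 0⟩, ⟨(-1), 0⟩, ⟨1, 0⟩, ⟨(-1), 0⟩)
]

/-- `t = (N, N⁻¹)` is the data of an isometry conjugating the anti-isometry of matrix
`[[a,b],[c,d]]` to `κ₁` or `κ₃`. -/
def goodFor (a b c d : GaussianInt)
    (t : GaussianInt × GaussianInt × GaussianInt × GaussianInt × GaussianInt × GaussianInt ×
      GaussianInt × GaussianInt) : Prop :=
  match t with
  | (n1, n2, n3, n4, p1, p2, p3, p4) =>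
    hz (n1,n3) (n1,n3) = -2 ∧ hz (n2,n4) (n2,n4) = -2 ∧ hz (n1,n3) (n2,n4) = 1 - gi ∧
    n1*p1+n2*p3 = 1 ∧ n1*p2+n2*p4 = 0 ∧ n3*p1+n4*p3 = 0 ∧ n3*p2+n4*p4 = 1 ∧
    p1*n1+p2*n3 = 1 ∧ p1*n2+p2*n4 = 0 ∧ p3*n1+p4*n3 = 0 ∧ p3*n2+p4*n4 = 1 ∧
    ((a*star n1 + b*star n3 = -n2 ∧ a*star n2 + b*star n4 = -n1 ∧
      c*star n1 + d*star n3 = -n4 ∧ c*star n2 + d*star n4 = -n3) ∨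
     (a*star n1 + b*star n3 = gi*n1 ∧ a*star n2 + b*star n4 = -n2 ∧
      c*star n1 + d*star n3 = gi*n3 ∧ c*star n2 + d*star n4 = -n4))

instance (a b c d : GaussianInt) (t : _) : Decidable (goodFor a b c d t) := by
  unfold goodFor; infer_instance

/-- The finite verification: every matrix of an involutive anti-isometry is conjugated to
the matrix of `κ₁` or of `κ₃` by one of the isometries in `conjList`. -/
theorem MAIN : ∀ a ∈ entries, ∀ b ∈ entries, ∀ c ∈ entries, ∀ d ∈ entries,
    (hz (a,c) (a,c) = -2 ∧ hz (b,d) (b,d) = -2 ∧ hz (a,c) (b,d) = 1 + gi ∧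
     a*star a + b*star c = 1 ∧ a*star b + b*star d = 0 ∧
     c*star a + d*star c = 0 ∧ c*star b + d*star d = 1) →
    ∃ t ∈ conjList, goodFor a b c d t := by decide

/-- A matrix whose columns form an `hz`-Gram system equal to that of the standard basis,
together with an explicit inverse, defines an isometry of `L_z`. -/
lemma isom_of_data (n1 n2 n3 n4 p1 p2 p3 p4 : GaussianInt)
    (g11 : hz (n1,n3) (n1,n3) = -2) (g22 : hz (n2,n4) (n2,n4) = -2)
    (g12 : hz (n1,n3) (n2,n4) = 1 - gi)
    (i1 : n1*p1+n2*p3 = 1) (i2 : n1*p2+n2*p4 = 0) (i3 : n3*p1+n4*p3 = 0) (i4 : n3*p2+n4*p4 = 1)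
    (j1 : p1*n1+p2*n3 = 1) (j2 : p1*n2+p2*n4 = 0) (j3 : p3*n1+p4*n3 = 0) (j4 : p3*n2+p4*n4 = 1) :
    IsIsomLz (fun x => (n1*x.1 + n2*x.2, n3*x.1 + n4*x.2)) := by
  have g21 := congrArg star g12
  simp only [hz, star_add, star_mul, star_star, star_sub, star_one, star_neg, star_ofNat,
    star_gi] at g11 g22 g12 g21
  refine ⟨?_, ?_, ?_, ?_⟩
  · rw [Function.bijective_iff_has_inverse]
    refine ⟨fun x => (p1*x.1 + p2*x.2, p3*x.1 + p4*x.2), fun x => ?_, fun x => ?_⟩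
    · simp only [Prod.ext_iff]
      constructor
      · linear_combination x.1 * j1 + x.2 * j2
      · linear_combination x.1 * j3 + x.2 * j4
    · simp only [Prod.ext_iff]
      constructor
      · linear_combination x.1 * i1 + x.2 * i2
      · linear_combination x.1 * i3 + x.2 * i4
  · intro x y
    simp only [Prod.ext_iff, Prod.fst_add, Prod.snd_add]
    constructor <;> ring
  · intro c x
    simp only [Prod.ext_iff, Prod.smul_fst, Prod.smul_snd, smul_eq_mul]
    constructor <;> ring
  · intro x y
    simp only [hz, star_add, star_mul, star_star, star_sub, star_one, star_neg, star_ofNat,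
      star_gi]
    linear_combination (star x.1 * y.1) * g11 + (star x.1 * y.2) * g12 +
      (star x.2 * y.1) * g21 + (star x.2 * y.2) * g22

/-- Any additive, conjugate-linear map is determined by the images of the standard basis. -/
lemma nu_rep (ν : Lz → Lz) (hadd : ∀ x y : Lz, ν (x + y) = ν x + ν y)
    (hsmul : ∀ (c : GaussianInt) (x : Lz), ν (c • x) = star c • ν x) (x : Lz) :
    ν x = (star x.1 * (ν (1,0)).1 + star x.2 * (ν (0,1)).1,
           star x.1 * (ν (1,0)).2 + star x.2 * (ν (0,1)).2) := by
  have hx : x = x.1 • ((1,0) : Lz) + x.2 • ((0,1) : Lz) := by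
    simp [Prod.ext_iff]
  calc ν x = ν (x.1 • ((1,0) : Lz) + x.2 • ((0,1) : Lz)) := by rw [← hx]
    _ = star x.1 • ν (1,0) + star x.2 • ν (0,1) := by rw [hadd, hsmul, hsmul]
    _ = _ := by simp [Prod.ext_iff]

/-- The only vectors of norm `-2` fixed by `κ₁` are `±(i, i)`. -/
lemma fix_kappa1 (v : Lz) (hf : kappa1 v = v) (hn : hz v v = -2) :
    v = (gi, gi) ∨ v = (-gi, -gi) := by
  obtain ⟨⟨p1, p2⟩, ⟨q1, q2⟩⟩ := v
  simp only [kappa1, Prod.ext_iff, Zsqrtd.ext_iff] at hf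
  obtain ⟨⟨e1, e2⟩, e3, e4⟩ := hf
  simp only [Zsqrtd.re_neg, Zsqrtd.im_neg, Zsqrtd.re_star, Zsqrtd.im_star, neg_neg] at e1 e2 e3 e4
  rw [Zsqrtd.ext_iff] at hn
  obtain ⟨h1, _⟩ := hn
  simp only [hz, gi] at h1
  simp only [Zsqrtd.re_add, Zsqrtd.re_mul, Zsqrtd.im_mul, Zsqrtd.im_add, Zsqrtd.re_star,
    Zsqrtd.im_star, Zsqrtd.re_sub, Zsqrtd.im_sub, Zsqrtd.re_one, Zsqrtd.im_one,
    Zsqrtd.re_sqrtd, Zsqrtd.im_sqrtd, Zsqrtd.re_neg, Zsqrtd.im_neg,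
    show ((2:GaussianInt)).re = 2 from rfl, show ((2:GaussianInt)).im = 0 from rfl] at h1
  subst e3
  subst e4
  have key : 6*p1^2 + 2*p2^2 - 4*p1*p2 = 2 := by linear_combination -h1
  have h5 : p1^2 = 0 :=
    le_antisymm (by nlinarith [sq_nonneg (p1 - p2)]) (sq_nonneg p1)
  have hp1 : p1 = 0 := by nlinarith [sq_nonneg p1, h5]
  subst hp1
  have hsq : p2^2 = 1 := by nlinarith
  have hp2 : (p2 - 1) * (p2 + 1) = 0 := by linear_combination hsq
  rcases mul_eq_zero.1 hp2 with h | h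
  · left
    simp only [Prod.ext_iff, Zsqrtd.ext_iff, gi]
    refine ⟨⟨?_, ?_⟩, ?_, ?_⟩ <;> simp [Zsqrtd.re_sqrtd, Zsqrtd.im_sqrtd] <;> omega
  · right
    simp only [Prod.ext_iff, Zsqrtd.ext_iff, gi]
    refine ⟨⟨?_, ?_⟩, ?_, ?_⟩ <;> simp [Zsqrtd.re_sqrtd, Zsqrtd.im_sqrtd] <;> omega

/-- Every involutive anti-isometry `ν` of `L_z` is conjugate under
`Isom(L_z)` to exactly one of `κ₁` and `κ₃`: there is an isometry `A` with
`ν ∘ A = A ∘ κ₁` or `ν ∘ A = A ∘ κ₃` (i.e. `ν = A ∘ κᵢ ∘ A⁻¹`), and no isometry `A`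
satisfies `κ₃ ∘ A = A ∘ κ₁` (i.e. `κ₃ = A ∘ κ₁ ∘ A⁻¹`).  In particular `L_z` has
exactly two `Isom(L_z)`-conjugacy classes of involutive anti-isometries. -/
theorem stmt7 :
    (∀ ν : Lz → Lz, IsInvAntiIsomLz ν →
      ∃ A : Lz → Lz, IsIsomLz A ∧ (ν ∘ A = A ∘ kappa1 ∨ ν ∘ A = A ∘ kappa3)) ∧
    ¬ ∃ A : Lz → Lz, IsIsomLz A ∧ kappa3 ∘ A = A ∘ kappa1 := by
  constructor
  · intro ν hν
    obtain ⟨hbij, hadd, hsmul, hherm, hinv⟩ := hν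
    have hrep := nu_rep ν hadd hsmul
    have c1 : hz (ν (1,0)) (ν (1,0)) = -2 := by rw [hherm]; decide
    have c2 : hz (ν (0,1)) (ν (0,1)) = -2 := by rw [hherm]; decide
    have c3 : hz (ν (1,0)) (ν (0,1)) = 1 + gi := by rw [hherm]; decide
    obtain ⟨ha, hc⟩ := entries_bound _ c1
    obtain ⟨hb, hd⟩ := entries_bound _ c2
    have c1' : hz ((ν (1,0)).1, (ν (1,0)).2) ((ν (1,0)).1, (ν (1,0)).2) = -2 := by
      rw [Prod.mk.eta]; exact c1
    have c2' : hz ((ν (0,1)).1, (ν (0,1)).2) ((ν (0,1)).1, (ν (0,1)).2) = -2 := by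
      rw [Prod.mk.eta]; exact c2
    have c3' : hz ((ν (1,0)).1, (ν (1,0)).2) ((ν (0,1)).1, (ν (0,1)).2) = 1 + gi := by
      rw [Prod.mk.eta, Prod.mk.eta]; exact c3
    have e1 : ν (ν (1,0)) = (1,0) := hinv _
    have e2 : ν (ν (0,1)) = (0,1) := hinv _
    rw [hrep (ν (1,0)), Prod.mk.injEq] at e1
    rw [hrep (ν (0,1)), Prod.mk.injEq] at e2
    obtain ⟨e11, e12⟩ := e1
    obtain ⟨e21, e22⟩ := e2
    obtain ⟨t, ht, hgood⟩ := MAIN _ ha _ hb _ hc _ hd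
      ⟨c1', c2', c3', by linear_combination e11, by linear_combination e21,
        by linear_combination e12, by linear_combination e22⟩
    obtain ⟨n1, n2, n3, n4, p1, p2, p3, p4⟩ := t
    obtain ⟨g11, g22, g12, i1, i2, i3, i4, j1, j2, j3, j4, hrel⟩ := hgood
    refine ⟨fun x => (n1*x.1 + n2*x.2, n3*x.1 + n4*x.2),
      isom_of_data n1 n2 n3 n4 p1 p2 p3 p4 g11 g22 g12 i1 i2 i3 i4 j1 j2 j3 j4, ?_⟩
    rcases hrel with ⟨r1, r2, r3, r4⟩ | ⟨r1, r2, r3, r4⟩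
    · left
      funext x
      show ν (n1*x.1 + n2*x.2, n3*x.1 + n4*x.2) =
        (n1*(kappa1 x).1 + n2*(kappa1 x).2, n3*(kappa1 x).1 + n4*(kappa1 x).2)
      rw [hrep]
      simp only [kappa1, Prod.mk.injEq, star_add, star_mul, star_star]
      constructor
      · linear_combination (star x.1) * r1 + (star x.2) * r2
      · linear_combination (star x.1) * r3 + (star x.2) * r4
    · right
      funext x
      show ν (n1*x.1 + n2*x.2, n3*x.1 + n4*x.2) =
        (n1*(kappa3 x).1 + n2*(kappa3 x).2, n3*(kappa3 x).1 + n4*(kappa3 x).2)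
      rw [hrep]
      simp only [kappa3, Prod.mk.injEq, star_add, star_mul, star_star]
      constructor
      · linear_combination (star x.1) * r1 + (star x.2) * r2
      · linear_combination (star x.1) * r3 + (star x.2) * r4
  · rintro ⟨A, ⟨⟨hinj, hsurj⟩, hadd, hsmul, hherm⟩, hcomm⟩
    have hcomm' : ∀ x, kappa3 (A x) = A (kappa1 x) := fun x => congrFun hcomm x
    have hAneg : ∀ x : Lz, A (-x) = -A x := by
      intro x
      have := hsmul (-1) x
      simpa using this
    obtain ⟨u1, hu1⟩ := hsurj ((0, gi) : Lz)
    obtain ⟨u2, hu2⟩ := hsurj ((1 + gi, gi) : Lz)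
    have hf1 : kappa1 u1 = u1 := by
      apply hinj
      rw [← hcomm', hu1]
      decide
    have hf2 : kappa1 u2 = u2 := by
      apply hinj
      rw [← hcomm', hu2]
      decide
    have hn1 : hz u1 u1 = -2 := by rw [← hherm, hu1]; decide
    have hn2 : hz u2 u2 = -2 := by rw [← hherm, hu2]; decide
    rcases fix_kappa1 u1 hf1 hn1 with h1 | h1 <;> rcases fix_kappa1 u2 hf2 hn2 with h2 | h2
    · rw [h1] at hu1; rw [h2] at hu2; rw [hu1] at hu2; exact absurd hu2 (by decide)
    · have hng : ((-gi, -gi) : Lz) = -((gi, gi) : Lz) := by decide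
      rw [h1] at hu1
      rw [h2, hng, hAneg, hu1] at hu2
      exact absurd hu2 (by decide)
    · have hng : ((-gi, -gi) : Lz) = -((gi, gi) : Lz) := by decide
      rw [h2] at hu2
      rw [h1, hng, hAneg, hu2] at hu1
      exact absurd hu1 (by decide)
    · rw [h1] at hu1; rw [h2] at hu2; rw [hu1] at hu2; exact absurd hu2 (by decide)
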